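/- For L > 0 and V > 0 let I_{L,V} be the set of nondecreasing functions w : [0,L] → [0,V]. Then for every ε with 0 < ε ≤ LV/6, the set I_{L,V}, viewed as a subset of L¹([0,L]), can be covered by at most 2^{4LV/ε} sets of L¹-diameter at most 2ε. Equivalently, its Kolmogorov ε-entropy in L¹([0,L]) is at most 4LV/ε. -/

import Mathlib

open MeasureTheory

open Finset in
lemma centralBinom_le_aux : ∀ n : ℕ, 5 ≤ n → Nat.centralBinom n ≤ 2 ^ (2 * n - 2) := by
  intro n hn
  induction n, hn using Nat.le_induction with
  | base => decide
  | succ n hn ih =>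
    have key := Nat.succ_mul_centralBinom_succ n
    have h1 : (n + 1) * Nat.centralBinom (n + 1) ≤ (n + 1) * 2 ^ (2 * (n + 1) - 2) := by
      rw [key]
      calc 2 * (2 * n + 1) * Nat.centralBinom n ≤ (4 * (n + 1)) * 2 ^ (2 * n - 2) := by
            apply Nat.mul_le_mul (by omega) ih
        _ = (n + 1) * (4 * 2 ^ (2 * n - 2)) := by ring
        _ ≤ (n + 1) * 2 ^ (2 * (n + 1) - 2) := by
            apply Nat.mul_le_mul_left
            have h2 : 2 * (n + 1) - 2 = (2 * n - 2) + 2 := by omega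
            rw [h2, pow_add]
            omega
    exact Nat.le_of_mul_le_mul_left h1 (by omega)

lemma card_monotone_filter_le (n : ℕ) :
    ((Finset.univ : Finset (Fin n → Fin (n + 1))).filter (fun f => Monotone f)).card
      ≤ Nat.centralBinom n := by
  have hsm : ∀ f : Fin n → Fin (n + 1), Monotone f →
      StrictMono (fun k : Fin n => (f k : ℕ) + (k : ℕ)) := by
    intro f hmono i j hij
    have h3 : (f i : ℕ) ≤ (f j : ℕ) := hmono hij.le
    have h2 : (i : ℕ) < (j : ℕ) := hij
    show (f i : ℕ) + (i : ℕ) < (f j : ℕ) + (j : ℕ)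
    omega
  have h : ∀ f ∈ (Finset.univ : Finset (Fin n → Fin (n + 1))).filter (fun f => Monotone f),
      (Finset.univ.image (fun k : Fin n => (f k : ℕ) + (k : ℕ)))
        ∈ (Finset.range (2 * n)).powersetCard n := by
    intro f hf
    have hmono : Monotone f := (Finset.mem_filter.mp hf).2
    rw [Finset.mem_powersetCard]
    constructor
    · intro x hx
      rw [Finset.mem_image] at hx
      obtain ⟨k, _, rfl⟩ := hx
      rw [Finset.mem_range]
      have := (f k).isLt
      have := k.isLt
      omega
    · rw [Finset.card_image_of_injective _ (hsm f hmono).injective, Finset.card_univ,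
        Fintype.card_fin]
  have hinj : ∀ f ∈ (Finset.univ : Finset (Fin n → Fin (n + 1))).filter (fun f => Monotone f),
      ∀ g ∈ (Finset.univ : Finset (Fin n → Fin (n + 1))).filter (fun f => Monotone f),
      (Finset.univ.image (fun k : Fin n => (f k : ℕ) + (k : ℕ)))
        = (Finset.univ.image (fun k : Fin n => (g k : ℕ) + (k : ℕ))) → f = g := by
    intro f hf g hg heq
    have hmf : Monotone f := (Finset.mem_filter.mp hf).2
    have hmg : Monotone g := (Finset.mem_filter.mp hg).2
    have hcard : (Finset.univ.image (fun k : Fin n => (f k : ℕ) + (k : ℕ))).card = n := by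
      rw [Finset.card_image_of_injective _ (hsm f hmf).injective, Finset.card_univ,
        Fintype.card_fin]
    have e1 := Finset.orderEmbOfFin_unique hcard
      (f := fun k : Fin n => (f k : ℕ) + (k : ℕ))
      (fun x => Finset.mem_image_of_mem _ (Finset.mem_univ x)) (hsm f hmf)
    have e2 := Finset.orderEmbOfFin_unique hcard
      (f := fun k : Fin n => (g k : ℕ) + (k : ℕ))
      (fun x => by rw [heq]; exact Finset.mem_image_of_mem _ (Finset.mem_univ x)) (hsm g hmg)
    funext k
    have h5 : (f k : ℕ) + (k : ℕ) = (g k : ℕ) + (k : ℕ) := congrFun (e1.trans e2.symm) k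
    exact Fin.ext (by omega)
  calc _ ≤ ((Finset.range (2 * n)).powersetCard n).card :=
        Finset.card_le_card_of_injOn _ h hinj
    _ = Nat.choose (2 * n) n := by rw [Finset.card_powersetCard, Finset.card_range]
    _ = Nat.centralBinom n := (Nat.centralBinom_eq_two_mul_choose n).symm

lemma quant_eq_close {V : ℝ} {n : ℕ} (hV : 0 < V) (hn : 0 < n) {a b : ℝ}
    (ha : a ∈ Set.Icc 0 V) (hb : b ∈ Set.Icc 0 V)
    (h : min n ⌊a * n / V⌋₊ = min n ⌊b * n / V⌋₊) : |a - b| ≤ V / n := by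
  have hVn : (0:ℝ) < (n:ℝ) := by exact_mod_cast hn
  have key : ∀ x ∈ Set.Icc (0:ℝ) V, ∀ y ∈ Set.Icc (0:ℝ) V,
      min n ⌊x * n / V⌋₊ = min n ⌊y * n / V⌋₊ → x - y ≤ V / n := by
    intro x hx y hy hxy
    rcases lt_or_ge ⌊y * n / V⌋₊ n with hlt | hge
    · have hminy : min n ⌊y * n / V⌋₊ = ⌊y * n / V⌋₊ := min_eq_right hlt.le
      have hfx : ⌊x * n / V⌋₊ = ⌊y * n / V⌋₊ := by
        rw [hminy] at hxy
        rcases le_or_gt n ⌊x * n / V⌋₊ with h2 | h2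
        · rw [min_eq_left h2] at hxy; omega
        · rwa [min_eq_right h2.le] at hxy
      have h1 : x * n / V < (⌊y * n / V⌋₊ : ℝ) + 1 := by
        rw [← hfx]; exact Nat.lt_floor_add_one _
      have h2 : (⌊y * n / V⌋₊ : ℝ) ≤ y * n / V := Nat.floor_le (by
        have := hy.1; positivity)
      have hq : x * n / V < y * n / V + 1 := by linarith
      have hq2 : x * n < y * n + V := by
        have := mul_lt_mul_of_pos_right hq hV
        rw [div_mul_cancel₀ _ hV.ne'] at this
        nlinarith [div_mul_cancel₀ (y * n) hV.ne']
      rw [le_div_iff₀ hVn]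
      nlinarith
    · have hy2 : (n:ℝ) ≤ y * n / V := by
        have hfl := Nat.floor_le (R := ℝ) (show (0:ℝ) ≤ y * n / V by
          have := hy.1; positivity)
        calc (n:ℝ) ≤ (⌊y * n / V⌋₊ : ℝ) := by exact_mod_cast hge
          _ ≤ y * n / V := hfl
      have hVy : V ≤ y := by
        rw [le_div_iff₀ hV] at hy2
        nlinarith
      have h0 : x - y ≤ 0 := by linarith [hx.2]
      have : (0:ℝ) ≤ V / n := by positivity
      linarith
  exact abs_sub_le_iff.mpr ⟨key a ha b hb h, key b hb a ha h.symm⟩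


/-- De Lellis–Golse entropy bound: the class of nondecreasing functions `[0,L] → [0,V]`
can be covered, in the `L¹([0,L])` distance, by at most `2^(4LV/ε)` sets of
`L¹`-diameter at most `2ε`, whenever `0 < ε ≤ LV/6`. -/
theorem entropy_bound_monotone_class (L V ε : ℝ) (hL : 0 < L) (hV : 0 < V)
    (hε : 0 < ε) (hεLV : ε ≤ L * V / 6) :
    ∃ 𝒢 : Finset (Set (ℝ → ℝ)),
      (𝒢.card : ℝ) ≤ 2 ^ (4 * L * V / ε) ∧
      (∀ U ∈ 𝒢, ∀ w ∈ U, ∀ w' ∈ U,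
        ∫ x in Set.Icc (0:ℝ) L, |w x - w' x| ≤ 2 * ε) ∧
      {w : ℝ → ℝ | MonotoneOn w (Set.Icc 0 L) ∧
          ∀ x ∈ Set.Icc (0:ℝ) L, w x ∈ Set.Icc (0:ℝ) V} ⊆ ⋃ U ∈ 𝒢, U := by
  classical
  have hLV : 0 < L * V := mul_pos hL hV
  set n : ℕ := ⌈2 * L * V / ε⌉₊ with hn_def
  have h12 : (12:ℝ) ≤ 2 * L * V / ε := by
    rw [le_div_iff₀ hε]; nlinarith
  have hnge : 2 * L * V / ε ≤ (n:ℝ) := Nat.le_ceil _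
  have hn12 : 12 ≤ n := by exact_mod_cast le_trans h12 hnge
  have hn0 : 0 < n := by omega
  have hnR : (0:ℝ) < (n:ℝ) := by exact_mod_cast hn0
  have hnle : (n:ℝ) < 2 * L * V / ε + 1 := Nat.ceil_lt_add_one (by positivity)
  -- grid points
  set x : ℕ → ℝ := fun k => (k:ℝ) * (L / n) with hx_def
  have hx0 : x 0 = 0 := by simp [hx_def]
  have hxn : x n = L := by simp only [hx_def]; field_simp
  have hxmono : Monotone x := by
    intro i j hij
    simp only [hx_def]
    have : (i:ℝ) ≤ (j:ℝ) := by exact_mod_cast hij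
    have hLn : (0:ℝ) ≤ L / n := by positivity
    exact mul_le_mul_of_nonneg_right this hLn
  have hxmem : ∀ k, k ≤ n → x k ∈ Set.Icc (0:ℝ) L := by
    intro k hk
    constructor
    · simp only [hx_def]; positivity
    · rw [← hxn]; exact hxmono hk
  have hxstep : ∀ k : ℕ, x (k + 1) - x k = L / n := by
    intro k; simp only [hx_def]; push_cast; ring
  -- the class K
  set K : Set (ℝ → ℝ) := {w : ℝ → ℝ | MonotoneOn w (Set.Icc 0 L) ∧
      ∀ t ∈ Set.Icc (0:ℝ) L, w t ∈ Set.Icc (0:ℝ) V} with hK_def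
  -- discretization
  set Φ : (ℝ → ℝ) → ℕ → ℕ := fun w k => min n ⌊w (x k) * n / V⌋₊ with hΦ_def
  set U : (Fin n → Fin (n + 1)) → Set (ℝ → ℝ) :=
    fun f => {w | w ∈ K ∧ ∀ k : Fin n, Φ w (k : ℕ) = (f k : ℕ)} with hU_def
  set S : Finset (Fin n → Fin (n + 1)) :=
    (Finset.univ : Finset (Fin n → Fin (n + 1))).filter (fun f => Monotone f) with hS_def
  refine ⟨S.image U, ?_, ?_, ?_⟩
  · -- cardinality bound
    have hc1 : (S.image U).card ≤ S.card := Finset.card_image_le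
    have hc2 : S.card ≤ Nat.centralBinom n := card_monotone_filter_le n
    have hc3 : Nat.centralBinom n ≤ 2 ^ (2 * n - 2) := centralBinom_le_aux n (by omega)
    have hcn : ((S.image U).card : ℝ) ≤ (2:ℝ) ^ ((2 * n - 2 : ℕ) : ℝ) := by
      rw [Real.rpow_natCast]
      exact_mod_cast le_trans hc1 (le_trans hc2 hc3)
    refine le_trans hcn (Real.rpow_le_rpow_of_exponent_le one_le_two ?_)
    have hcast : ((2 * n - 2 : ℕ) : ℝ) = 2 * (n : ℝ) - 2 := by
      have : 2 ≤ 2 * n := by omega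
      push_cast [Nat.cast_sub this]
      ring
    rw [hcast]
    have : 4 * L * V / ε = 2 * (2 * L * V / ε) := by ring
    rw [this]
    linarith
  · -- diameter bound
    intro Uf hUf w hw w' hw'
    rw [Finset.mem_image] at hUf
    obtain ⟨f, hfS, rfl⟩ := hUf
    obtain ⟨hwK, hwΦ⟩ := hw
    obtain ⟨hw'K, hw'Φ⟩ := hw'
    -- pointwise bound on each subinterval
    have hptwise : ∀ k : ℕ, k < n → ∀ t ∈ Set.Icc (x k) (x (k + 1)),
        |w t - w' t| ≤ (w (x (k+1)) - w (x k)) + (w' (x (k+1)) - w' (x k)) + V / n := by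
      intro k hk t ht
      have hxk : x k ∈ Set.Icc (0:ℝ) L := hxmem k (by omega)
      have hxk1 : x (k+1) ∈ Set.Icc (0:ℝ) L := hxmem (k+1) (by omega)
      have htL : t ∈ Set.Icc (0:ℝ) L := ⟨le_trans hxk.1 ht.1, le_trans ht.2 hxk1.2⟩
      have h1 : w t ≤ w (x (k+1)) := hwK.1 htL hxk1 ht.2
      have h2 : w (x k) ≤ w t := hwK.1 hxk htL ht.1
      have h1' : w' t ≤ w' (x (k+1)) := hw'K.1 htL hxk1 ht.2
      have h2' : w' (x k) ≤ w' t := hw'K.1 hxk htL ht.1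
      have hq : |w (x k) - w' (x k)| ≤ V / n := by
        apply quant_eq_close hV hn0 (hwK.2 _ hxk) (hw'K.2 _ hxk)
        have := (hwΦ ⟨k, hk⟩).trans (hw'Φ ⟨k, hk⟩).symm
        simpa [hΦ_def] using this
      rw [abs_le] at hq ⊢
      constructor <;> nlinarith [hq.1, hq.2]
    -- integrability
    have hIw : IntegrableOn w (Set.Icc 0 L) volume :=
      hwK.1.integrableOn_isCompact isCompact_Icc
    have hIw' : IntegrableOn w' (Set.Icc 0 L) volume :=
      hw'K.1.integrableOn_isCompact isCompact_Icc
    have hIdiff : IntegrableOn (fun t => |w t - w' t|) (Set.Icc 0 L) volume :=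
      (hIw.sub hIw').abs
    have hint : ∀ k < n, IntervalIntegrable (fun t => |w t - w' t|) volume (x k) (x (k+1)) := by
      intro k hk
      have hsub : Set.uIcc (x k) (x (k+1)) ⊆ Set.Icc (0:ℝ) L := by
        rw [Set.uIcc_of_le (hxmono (by omega : k ≤ k+1))]
        exact Set.Icc_subset_Icc (hxmem k (by omega)).1 (hxmem (k+1) (by omega)).2
      exact (hIdiff.mono_set hsub).intervalIntegrable
    have hsplit : ∑ k ∈ Finset.range n, ∫ t in (x k)..(x (k+1)), |w t - w' t|
        = ∫ t in (x 0)..(x n), |w t - w' t| :=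
      intervalIntegral.sum_integral_adjacent_intervals hint
    have heq1 : ∫ t in Set.Icc (0:ℝ) L, |w t - w' t|
        = ∑ k ∈ Finset.range n, ∫ t in (x k)..(x (k+1)), |w t - w' t| := by
      rw [hsplit, hx0, hxn, intervalIntegral.integral_of_le hL.le,
        MeasureTheory.integral_Icc_eq_integral_Ioc]
    rw [heq1]
    have hbound : ∀ k ∈ Finset.range n, (∫ t in (x k)..(x (k+1)), |w t - w' t|)
        ≤ ((w (x (k+1)) - w (x k)) + (w' (x (k+1)) - w' (x k)) + V / n) * (L / n) := by
      intro k hk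
      rw [Finset.mem_range] at hk
      have hle : x k ≤ x (k+1) := hxmono (by omega)
      calc (∫ t in (x k)..(x (k+1)), |w t - w' t|)
          ≤ ∫ _t in (x k)..(x (k+1)),
            ((w (x (k+1)) - w (x k)) + (w' (x (k+1)) - w' (x k)) + V / n) := by
            apply intervalIntegral.integral_mono_on hle (hint k hk) intervalIntegrable_const
            exact hptwise k hk
        _ = ((w (x (k+1)) - w (x k)) + (w' (x (k+1)) - w' (x k)) + V / n) * (L / n) := by
            rw [intervalIntegral.integral_const, hxstep k, smul_eq_mul, mul_comm]
    refine le_trans (Finset.sum_le_sum hbound) ?_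
    have hsum : ∑ k ∈ Finset.range n,
        ((w (x (k+1)) - w (x k)) + (w' (x (k+1)) - w' (x k)) + V / n) * (L / n)
        = ((w (x n) - w (x 0)) + (w' (x n) - w' (x 0)) + n * (V / n)) * (L / n) := by
      rw [← Finset.sum_mul]
      congr 1
      rw [Finset.sum_add_distrib, Finset.sum_add_distrib,
        Finset.sum_range_sub (fun k => w (x k)) n, Finset.sum_range_sub (fun k => w' (x k)) n,
        Finset.sum_const, Finset.card_range, nsmul_eq_mul]
    rw [hsum, hx0, hxn]
    -- final arithmetic
    have hw0 : w 0 ∈ Set.Icc (0:ℝ) V := hwK.2 0 (Set.mem_Icc.mpr ⟨le_rfl, hL.le⟩)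
    have hwL : w L ∈ Set.Icc (0:ℝ) V := hwK.2 L (Set.mem_Icc.mpr ⟨hL.le, le_rfl⟩)
    have hw'0 : w' 0 ∈ Set.Icc (0:ℝ) V := hw'K.2 0 (Set.mem_Icc.mpr ⟨le_rfl, hL.le⟩)
    have hw'L : w' L ∈ Set.Icc (0:ℝ) V := hw'K.2 L (Set.mem_Icc.mpr ⟨hL.le, le_rfl⟩)
    have hnV : (n:ℝ) * (V / n) = V := by field_simp
    rw [hnV]
    have h3 : (w L - w 0) + (w' L - w' 0) + V ≤ 3 * V := by
      linarith [hw0.1, hwL.2, hw'0.1, hw'L.2]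
    have hLn : (0:ℝ) < L / n := by positivity
    calc ((w L - w 0) + (w' L - w' 0) + V) * (L / n) ≤ 3 * V * (L / n) := by
          exact mul_le_mul_of_nonneg_right h3 hLn.le
      _ = 3 * V * L / n := by ring
      _ ≤ 2 * ε := by
          rw [div_le_iff₀ hnR]
          have h2 : 2 * L * V ≤ (n:ℝ) * ε := (div_le_iff₀ hε).mp hnge
          have h4 : (0:ℝ) < (n:ℝ) * ε := by positivity
          nlinarith
  · -- covering
    intro w hw
    have hwv : ∀ k, k ≤ n → Φ w k ≤ n := fun k _ => min_le_left _ _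
    set f : Fin n → Fin (n + 1) := fun k => ⟨Φ w (k : ℕ), Nat.lt_succ_of_le (min_le_left _ _)⟩
      with hf_def
    have hfmono : Monotone f := by
      intro i j hij
      have hwx : w (x (i:ℕ)) ≤ w (x (j:ℕ)) :=
        hw.1 (hxmem _ (le_of_lt i.isLt)) (hxmem _ (le_of_lt j.isLt)) (hxmono hij)
      have hfl : ⌊w (x (i:ℕ)) * n / V⌋₊ ≤ ⌊w (x (j:ℕ)) * n / V⌋₊ := by
        apply Nat.floor_le_floor
        have hmn : w (x (i:ℕ)) * n ≤ w (x (j:ℕ)) * n := mul_le_mul_of_nonneg_right hwx hnR.le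
        exact (div_le_div_iff_of_pos_right hV).mpr hmn
      show Φ w (i:ℕ) ≤ Φ w (j:ℕ)
      exact min_le_min le_rfl hfl
    have hfS : f ∈ S := by
      rw [hS_def, Finset.mem_filter]
      exact ⟨Finset.mem_univ f, hfmono⟩
    have hwU : w ∈ U f := ⟨hw, fun k => rfl⟩
    exact Set.mem_biUnion (Finset.mem_image_of_mem U hfS) hwU
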